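/- Assume Yu's one-dimensional restricted bound: there exists N₀ such that for every even integer n ≥ N₀, every finite set B ⊆ [0,n/2] of integers with B + B ⊇ [0,n] satisfies n ≤ 0.41983 · |B|². Then there exists N₁ such that for every even integer s_x ≥ N₁, every finite set A ⊆ [0,s_x/2] × [0,2] of integer pairs with A + A ⊇ [0,s_x] × [0,4] satisfies 5(s_x + 1) < 0.3585 · |A|². -/

import Mathlib

open Pointwise

private lemma aux_real (s u v w k : ℝ) (hs : 1000000 ≤ s)
    (hu0 : 0 ≤ u) (hv0 : 0 ≤ v) (hw0 : 0 ≤ w)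
    (h0 : s ≤ 0.41983 * u ^ 2) (h2 : s ≤ 0.41983 * w ^ 2)
    (h1 : s + 1 ≤ u * v) (hk : u + v + w ≤ k) :
    5 * (s + 1) < 0.3585 * k ^ 2 := by
  have hc : (0:ℝ) < 0.41983 := by norm_num
  set t : ℝ := Real.sqrt (s / 0.41983) with ht
  have ht2 : t ^ 2 = s / 0.41983 := Real.sq_sqrt (by positivity)
  have ht0 : 0 ≤ t := Real.sqrt_nonneg _
  have hst : 0.41983 * t ^ 2 = s := by rw [ht2]; field_simp
  have htpos : 0 < t := by nlinarith
  have hu : t ≤ u := by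
    rw [ht, show u = Real.sqrt (u ^ 2) from (Real.sqrt_sq hu0).symm]
    apply Real.sqrt_le_sqrt
    rw [div_le_iff₀ hc]
    nlinarith
  have hw : t ≤ w := by
    rw [ht, show w = Real.sqrt (w ^ 2) from (Real.sqrt_sq hw0).symm]
    apply Real.sqrt_le_sqrt
    rw [div_le_iff₀ hc]
    nlinarith
  have hupos : 0 < u := lt_of_lt_of_le htpos hu
  have hfac : 0 ≤ (u - t) * (u - 0.41983 * t) := by
    apply mul_nonneg <;> nlinarith
  have huv : (1 + 0.41983) * t ≤ u + v := by
    nlinarith [mul_pos hupos htpos, hfac]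
  have hkt : (2 + 0.41983) * t ≤ k := by linarith
  have hk2 : (2 + 0.41983) ^ 2 * t ^ 2 ≤ k ^ 2 := by nlinarith
  nlinarith [hk2, hst]

theorem restricted_upper_bound_height_four
    (hYu : ∃ N₀ : ℕ, ∀ n : ℕ, N₀ ≤ n → Even n → ∀ B : Finset ℕ,
      (∀ b ∈ B, b ≤ n / 2) → (∀ m ≤ n, m ∈ B + B) →
      (n : ℝ) ≤ 0.41983 * (B.card : ℝ) ^ 2) :
    ∃ N₁ : ℕ, ∀ sx : ℕ, N₁ ≤ sx → Even sx → ∀ A : Finset (ℕ × ℕ),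
      (∀ p ∈ A, p.1 ≤ sx / 2 ∧ p.2 ≤ 2) →
      (∀ x ≤ sx, ∀ y ≤ 4, (x, y) ∈ A + A) →
      (5 * (sx + 1) : ℝ) < 0.3585 * (A.card : ℝ) ^ 2 := by
  obtain ⟨N₀, hYu⟩ := hYu
  refine ⟨max N₀ 1000000, fun sx hsx hev A hA hcov => ?_⟩
  have hN₀ : N₀ ≤ sx := le_trans (le_max_left _ _) hsx
  have hM : (1000000 : ℕ) ≤ sx := le_trans (le_max_right _ _) hsx
  classical
  set R0 := A.filter (fun p => p.2 = 0) with hR0def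
  set R1 := A.filter (fun p => p.2 = 1) with hR1def
  set R2 := A.filter (fun p => p.2 = 2) with hR2def
  -- Yu bound for row 0
  have hrow0 : (sx : ℝ) ≤ 0.41983 * (R0.card : ℝ) ^ 2 := by
    have hY := hYu sx hN₀ hev (R0.image Prod.fst)
      (by
        intro b hb
        simp only [Finset.mem_image] at hb
        obtain ⟨p, hp, rfl⟩ := hb
        exact (hA p (Finset.mem_filter.mp hp).1).1)
      (by
        intro m hm
        have hmem := hcov m hm 0 (by norm_num)
        rw [Finset.mem_add] at hmem
        obtain ⟨y, hy, z, hz, hyz⟩ := hmem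
        have h1 : y.1 + z.1 = m := congrArg Prod.fst hyz
        have h2 : y.2 + z.2 = 0 := congrArg Prod.snd hyz
        rw [Finset.mem_add]
        refine ⟨y.1, ?_, z.1, ?_, h1⟩ <;>
          apply Finset.mem_image_of_mem <;> rw [Finset.mem_filter]
        · exact ⟨hy, by omega⟩
        · exact ⟨hz, by omega⟩)
    have hcardn : (R0.image Prod.fst).card ≤ R0.card := Finset.card_image_le
    have hcard : ((R0.image Prod.fst).card : ℝ) ≤ (R0.card : ℝ) := Nat.cast_le.mpr hcardn
    have hsq : ((R0.image Prod.fst).card : ℝ) ^ 2 ≤ (R0.card : ℝ) ^ 2 :=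
      pow_le_pow_left₀ (Nat.cast_nonneg _) hcard 2
    nlinarith [hY, hsq]
  -- Yu bound for row 2
  have hrow2 : (sx : ℝ) ≤ 0.41983 * (R2.card : ℝ) ^ 2 := by
    have hY := hYu sx hN₀ hev (R2.image Prod.fst)
      (by
        intro b hb
        simp only [Finset.mem_image] at hb
        obtain ⟨p, hp, rfl⟩ := hb
        exact (hA p (Finset.mem_filter.mp hp).1).1)
      (by
        intro m hm
        have hmem := hcov m hm 4 (by norm_num)
        rw [Finset.mem_add] at hmem
        obtain ⟨y, hy, z, hz, hyz⟩ := hmem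
        have h1 : y.1 + z.1 = m := congrArg Prod.fst hyz
        have h2 : y.2 + z.2 = 4 := congrArg Prod.snd hyz
        have hy2 := (hA y hy).2
        have hz2 := (hA z hz).2
        rw [Finset.mem_add]
        refine ⟨y.1, ?_, z.1, ?_, h1⟩ <;>
          apply Finset.mem_image_of_mem <;> rw [Finset.mem_filter]
        · exact ⟨hy, by omega⟩
        · exact ⟨hz, by omega⟩)
    have hcard : ((R2.image Prod.fst).card : ℝ) ≤ (R2.card : ℝ) := by
      exact_mod_cast Finset.card_image_le
    have hsq : ((R2.image Prod.fst).card : ℝ) ^ 2 ≤ (R2.card : ℝ) ^ 2 :=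
      pow_le_pow_left₀ (Nat.cast_nonneg _) hcard 2
    nlinarith [hY, hsq]
  -- counting bound: sx + 1 ≤ |R0| * |R1|
  have hcount : sx + 1 ≤ R0.card * R1.card := by
    have hex : ∀ m : ℕ, ∃ pq : (ℕ × ℕ) × (ℕ × ℕ), m ≤ sx →
        pq.1 ∈ R0 ∧ pq.2 ∈ R1 ∧ pq.1.1 + pq.2.1 = m := by
      intro m
      by_cases hm : m ≤ sx
      · have hmem := hcov m hm 1 (by norm_num)
        rw [Finset.mem_add] at hmem
        obtain ⟨y, hy, z, hz, hyz⟩ := hmem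
        have h1 : y.1 + z.1 = m := congrArg Prod.fst hyz
        have h2 : y.2 + z.2 = 1 := congrArg Prod.snd hyz
        rcases Nat.eq_zero_or_pos y.2 with hy2 | hy2
        · exact ⟨(y, z), fun _ => ⟨Finset.mem_filter.mpr ⟨hy, hy2⟩,
            Finset.mem_filter.mpr ⟨hz, show z.2 = 1 by omega⟩,
            show y.1 + z.1 = m from h1⟩⟩
        · exact ⟨(z, y), fun _ => ⟨Finset.mem_filter.mpr ⟨hz, show z.2 = 0 by omega⟩,
            Finset.mem_filter.mpr ⟨hy, show y.2 = 1 by omega⟩,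
            show z.1 + y.1 = m by omega⟩⟩
      · exact ⟨((0,0),(0,0)), fun h => absurd h hm⟩
    choose f hf using hex
    have hinj : ∀ m ∈ Finset.range (sx + 1), ∀ m' ∈ Finset.range (sx + 1),
        f m = f m' → m = m' := by
      intro m hm m' hm' hfe
      rw [Finset.mem_range] at hm hm'
      have h1 := (hf m (by omega)).2.2
      have h2 := (hf m' (by omega)).2.2
      rw [hfe] at h1
      omega
    have := Finset.card_le_card_of_injOn f
      (fun m hm => by
        rw [Finset.mem_coe, Finset.mem_range] at hm
        exact Finset.mem_coe.mpr (Finset.mem_product.mpr ⟨(hf m (by omega)).1, (hf m (by omega)).2.1⟩))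
      hinj
    simpa [Finset.card_product] using this
  -- cards add up
  have hcards : R0.card + R1.card + R2.card ≤ A.card := by
    have hd01 : Disjoint R0 R1 := by
      rw [Finset.disjoint_left]
      intro p hp hq
      have := (Finset.mem_filter.mp hp).2
      have := (Finset.mem_filter.mp hq).2
      omega
    have hd2 : Disjoint (R0 ∪ R1) R2 := by
      rw [Finset.disjoint_left]
      intro p hp hq
      have h2 := (Finset.mem_filter.mp hq).2
      rcases Finset.mem_union.mp hp with h | h
      · have := (Finset.mem_filter.mp h).2; omega
      · have := (Finset.mem_filter.mp h).2; omega
    calc R0.card + R1.card + R2.card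
        = (R0 ∪ R1).card + R2.card := by rw [Finset.card_union_of_disjoint hd01]
      _ = ((R0 ∪ R1) ∪ R2).card := (Finset.card_union_of_disjoint hd2).symm
      _ ≤ A.card := Finset.card_le_card (by
          intro p hp
          rcases Finset.mem_union.mp hp with h | h
          · rcases Finset.mem_union.mp h with h' | h'
            · exact (Finset.mem_filter.mp h').1
            · exact (Finset.mem_filter.mp h').1
          · exact (Finset.mem_filter.mp h).1)
  -- conclude
  have hcount' : (sx : ℝ) + 1 ≤ (R0.card : ℝ) * (R1.card : ℝ) := by
    exact_mod_cast hcount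
  have hcards' : (R0.card : ℝ) + (R1.card : ℝ) + (R2.card : ℝ) ≤ (A.card : ℝ) := by
    exact_mod_cast hcards
  have hM' : (1000000 : ℝ) ≤ (sx : ℝ) := by exact_mod_cast hM
  exact aux_real sx R0.card R1.card R2.card A.card hM'
    (Nat.cast_nonneg _) (Nat.cast_nonneg _) (Nat.cast_nonneg _)
    hrow0 hrow2 hcount' hcards'
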